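/- Let X be a bipartite mixed graph with a unique perfect matching and H_α its α-hermitian adjacency matrix. Then every diagonal entry of the inverse matrix H_α⁻¹ is zero. -/

import Mathlib

open SimpleGraph
open scoped Classical

noncomputable section

variable {V : Type*}

structure MixedGraph (V : Type*) where
  digon : V → V → Prop
  arc : V → V → Prop
  digon_symm : ∀ u v, digon u v → digon v u
  digon_irrefl : ∀ v, ¬ digon v v
  arc_irrefl : ∀ v, ¬ arc v v
  arc_asymm : ∀ u v, arc u v → ¬ arc v u
  digon_arc : ∀ u v, digon u v → ¬ arc u v ∧ ¬ arc v u

def MixedGraph.underlying (X : MixedGraph V) : SimpleGraph V where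
  Adj u v := X.digon u v ∨ X.arc u v ∨ X.arc v u
  symm := by
    constructor
    intro u v h
    rcases h with h | h | h
    · exact Or.inl (X.digon_symm u v h)
    · exact Or.inr (Or.inr h)
    · exact Or.inr (Or.inl h)
  loopless := by
    constructor
    intro v h
    rcases h with h | h | h
    · exact X.digon_irrefl v h
    · exact X.arc_irrefl v h
    · exact X.arc_irrefl v h

/-- The α-hermitian adjacency matrix of a mixed graph. -/
def Halpha (X : MixedGraph V) (α : ℂ) : Matrix V V ℂ := fun u v =>
  if X.digon u v then 1
  else if X.arc u v then α
  else if X.arc v u then (starRingEnd ℂ) α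
  else 0

/-- The value h_α of a walk: product of matrix entries along consecutive vertices. -/
def hWalk (X : MixedGraph V) (α : ℂ) {u v : V} (p : X.underlying.Walk u v) : ℂ :=
  (p.darts.map (fun d => Halpha X α d.toProd.1 d.toProd.2)).prod

/-- A co-augmenting path w.r.t. a matching edge set `M`: a path whose edges alternate
matching / non-matching, beginning and ending with matching edges. -/
def IsCoAugmenting (G : SimpleGraph V) (M : Set (Sym2 V)) {u v : V} (p : G.Walk u v) : Prop :=
  p.IsPath ∧ Odd p.edges.length ∧
    ∀ i : Fin p.edges.length, (p.edges.get i ∈ M ↔ Even i.val)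

/-- `G` is unicyclic: connected with exactly one cycle (all cycles have the same edge set). -/
def IsUnicyclic (G : SimpleGraph V) : Prop :=
  G.Connected ∧ (∃ (u : V) (c : G.Walk u u), c.IsCycle) ∧
    ∀ (u v : V) (c : G.Walk u u) (d : G.Walk v v), c.IsCycle → d.IsCycle →
      {e | e ∈ c.edges} = {e | e ∈ d.edges}

/-- A peg: a matching edge incident to a vertex of the cycle `c` but not an edge of `c`. -/
def IsPeg (G : SimpleGraph V) (M : G.Subgraph) {u : V} (c : G.Walk u u) (e : Sym2 V) : Prop :=
  e ∈ M.edgeSet ∧ e ∉ c.edges ∧ ∃ x ∈ c.support, x ∈ e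

/-- Restriction of a matching to an induced subgraph. -/
def restrictMatching (G : SimpleGraph V) (M : G.Subgraph) (s : Set V) :
    (G.induce s).Subgraph where
  verts := Set.univ
  Adj a b := M.Adj a.1 b.1
  adj_sub h := M.adj_sub h
  edge_vert _ := Set.mem_univ _
  symm := by
    constructor
    intro _ _ h
    exact M.adj_symm h

/-- The sign `f_W` at the end of a walk: starts at 1 and flips across non-matching edges. -/
def fEnd (G : SimpleGraph V) (M : Set (Sym2 V)) : ∀ {u v : V}, G.Walk u v → ℤ
  | _, _, SimpleGraph.Walk.nil => 1
  | _, _, @SimpleGraph.Walk.cons _ _ u w _ _ p =>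
      if s(u, w) ∈ M then fEnd G M p else - fEnd G M p

end

/-- All diagonal entries of the inverse of the α-hermitian adjacency matrix of a
bipartite mixed graph with a unique perfect matching vanish. -/
theorem stmt6 {V : Type*} [Fintype V] [DecidableEq V]
    (X : MixedGraph V) (α : ℂ) (hα : ‖α‖ = 1)
    (hbip : X.underlying.Colorable 2)
    (M : X.underlying.Subgraph) (hM : M.IsPerfectMatching)
    (huniq : ∀ N : X.underlying.Subgraph, N.IsPerfectMatching → N = M) :
    ∀ i : V, (Halpha X α)⁻¹ i i = 0 := by
  intro i
  obtain ⟨c⟩ := hbip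
  set s : V → ℂ := fun v => (-1 : ℂ) ^ (c v : ℕ) with hsdef
  set D : Matrix V V ℂ := Matrix.diagonal s with hDdef
  have hs2 : ∀ v, s v * s v = 1 := by
    intro v
    rw [hsdef]
    rw [← mul_pow]
    norm_num
  have hDD : D * D = 1 := by
    rw [hDdef, Matrix.diagonal_mul_diagonal]
    rw [show (fun v => s v * s v) = fun _ => (1 : ℂ) from funext hs2]
    exact Matrix.diagonal_one
  have hkey : D * Halpha X α * D = -(Halpha X α) := by
    ext u v
    simp only [hDdef, Matrix.diagonal_mul, Matrix.mul_diagonal, Matrix.neg_apply]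
    by_cases hadj : X.underlying.Adj u v
    · have hne := c.valid hadj
      have hcases : ∀ x : Fin 2, x = 0 ∨ x = 1 := by decide
      rcases hcases (c u) with h1 | h1 <;> rcases hcases (c v) with h2 | h2
      · exact absurd (h1.trans h2.symm) hne
      · simp only [hsdef, h1, h2]
        norm_num
      · simp only [hsdef, h1, h2]
        norm_num
      · exact absurd (h1.trans h2.symm) hne
    · have h0 : Halpha X α u v = 0 := by
        unfold Halpha
        rw [if_neg (fun h => hadj (Or.inl h)),
          if_neg (fun h => hadj (Or.inr (Or.inl h))),
          if_neg (fun h => hadj (Or.inr (Or.inr h)))]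
      rw [h0]
      ring
  by_cases hinv : IsUnit (Halpha X α).det
  · have h1 : (Halpha X α)⁻¹ * Halpha X α = 1 := Matrix.nonsing_inv_mul _ hinv
    have hLI : (-(D * (Halpha X α)⁻¹ * D)) * (-(D * (Halpha X α) * D)) = 1 := by
      calc (-(D * (Halpha X α)⁻¹ * D)) * (-(D * (Halpha X α) * D))
          = D * ((Halpha X α)⁻¹ * ((D * D) * (Halpha X α))) * D := by noncomm_ring
        _ = 1 := by rw [hDD, one_mul, h1, mul_one]; exact hDD
    rw [hkey, neg_neg] at hLI
    have hinveq : (Halpha X α)⁻¹ = -(D * (Halpha X α)⁻¹ * D) :=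
      Matrix.inv_eq_left_inv hLI
    have hx := congrFun (congrFun hinveq i) i
    simp only [Matrix.neg_apply, hDdef, Matrix.diagonal_mul, Matrix.mul_diagonal] at hx
    have ht := hs2 i
    have h2 : (Halpha X α)⁻¹ i i = -((Halpha X α)⁻¹ i i) := by
      linear_combination hx - (Halpha X α)⁻¹ i i * ht
    exact add_self_eq_zero.mp (by linear_combination h2)
  · rw [Matrix.nonsing_inv_apply_not_isUnit _ hinv]
    simp
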